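/- arXiv:2401.13862 — 2 statements merged into one kernel-verified Lean document; each statement's English description precedes it below -/
import Mathlib

section
/- For n ≥ 1, define the generalized Veronese map Φ_n : ℝ^{n+1} → ℝ^{m(n)} (with m(n) = n(n+3)/2) inductively by Φ_1(x_1,x_2) = (2x_1x_2, x_1² − x_2²) and, for n ≥ 2, Φ_n(x_1,…,x_{n+1}) = a_n( (1/a_{n−1})Φ_{n−1}(x_1,…,x_n), x_1x_{n+1}, …, x_n x_{n+1}, (1/(n a_n))(x_1²+⋯+x_n² − n x_{n+1}²) ), where a_n = √((2n+2)/n). Then |Φ_n(x)| = |x|² for every x ∈ ℝ^{n+1}. -/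
/-- `m(n) = n(n+3)/2`, the multiplicity of the first eigenvalue of round `ℝP^n`. -/
def mdim (n : ℕ) : ℕ := n * (n + 3) / 2

/-- `a_n = √((2n+2)/n)`. -/
noncomputable def aCoef (n : ℕ) : ℝ := Real.sqrt ((2 * n + 2) / n)

/-- The generalized Veronese map `Φ_n : ℝ^{n+1} → ℝ^{m(n)}` defined inductively. -/
noncomputable def Phi : (n : ℕ) → (Fin (n + 1) → ℝ) → Fin (mdim n) → ℝ
  | 0, _, _ => 0
  | 1, x, i => if (i : ℕ) = 0 then 2 * x 0 * x 1 else x 0 ^ 2 - x 1 ^ 2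
  | (n + 2), x, i =>
      aCoef (n + 2) *
        (if h1 : (i : ℕ) < mdim (n + 1) then
          (1 / aCoef (n + 1)) * Phi (n + 1) (fun j => x j.castSucc) ⟨i, h1⟩
        else if h2 : (i : ℕ) < mdim (n + 1) + (n + 2) then
          x ⟨(i : ℕ) - mdim (n + 1), by omega⟩ * x (Fin.last (n + 2))
        else
          (1 / ((n + 2) * aCoef (n + 2))) *
            ((∑ j : Fin (n + 2), x j.castSucc ^ 2) - (n + 2) * x (Fin.last (n + 2)) ^ 2))

lemma mdim_succ (n : ℕ) : mdim (n + 1) = mdim n + (n + 2) := by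
  have he : 2 ∣ n * (n + 3) := by
    obtain ⟨m, hm⟩ := Nat.even_mul_succ_self n
    exact ⟨m + n, by nlinarith⟩
  obtain ⟨k, hk⟩ := he
  have h2 : (n + 1) * (n + 1 + 3) = 2 * (k + (n + 2)) := by nlinarith
  unfold mdim
  rw [hk, h2]
  omega

lemma sum_fin_eq_sum_range (m : ℕ) (f : (k : ℕ) → k < m → ℝ) :
    ∑ i : Fin m, f i i.isLt = ∑ k ∈ Finset.range m, if h : k < m then f k h else 0 := by
  rw [← Fin.sum_univ_eq_sum_range (fun k => if h : k < m then f k h else 0) m]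
  exact Finset.sum_congr rfl fun i _ => by simp [i.isLt]

lemma aCoef_pos (n : ℕ) (hn : 1 ≤ n) : 0 < aCoef n := by
  apply Real.sqrt_pos.2
  have : (0:ℝ) < n := by exact_mod_cast hn
  positivity

lemma aCoef_sq (n : ℕ) (hn : 1 ≤ n) : aCoef n ^ 2 = (2 * n + 2) / n := by
  apply Real.sq_sqrt
  have : (0:ℝ) < n := by exact_mod_cast hn
  positivity

lemma phi_sum (n : ℕ) : ∀ x : Fin (n + 2) → ℝ,
    ∑ i, Phi (n + 1) x i ^ 2 = (∑ j, x j ^ 2) ^ 2 := by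
  induction n with
  | zero =>
    intro x
    show (∑ i : Fin 2, Phi 1 x i ^ 2) = (∑ j : Fin 2, x j ^ 2) ^ 2
    rw [Fin.sum_univ_two, Fin.sum_univ_two]
    simp only [Phi]
    norm_num
    ring
  | succ n ih =>
    intro x
    set y : Fin (n + 2) → ℝ := fun j => x j.castSucc with hy
    set Q : ℝ := ∑ j : Fin (n + 2), x j.castSucc ^ 2 with hQ
    set L : ℝ := x (Fin.last (n + 2)) with hLdef
    have hIH : (∑ i, Phi (n + 1) y i ^ 2) = Q ^ 2 := ih y
    have hm2 : mdim (n + 2) = mdim (n + 1) + (n + 2) + 1 := by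
      rw [mdim_succ (n + 1)]; omega
    have hN1 : (1:ℕ) ≤ n + 1 := by omega
    have hN2 : (1:ℕ) ≤ n + 2 := by omega
    have hapos := aCoef_pos (n + 2) hN2
    have ha'pos := aCoef_pos (n + 1) hN1
    set a : ℝ := aCoef (n + 2) with hadef
    set a' : ℝ := aCoef (n + 1) with ha'def
    have ha : a ^ 2 = (2 * ((n:ℝ) + 2) + 2) / ((n:ℝ) + 2) := by
      rw [hadef, aCoef_sq (n + 2) hN2]; push_cast; ring_nf
    have ha' : a' ^ 2 = (2 * ((n:ℝ) + 1) + 2) / ((n:ℝ) + 1) := by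
      rw [ha'def, aCoef_sq (n + 1) hN1]; push_cast; ring_nf
    have hRHS : (∑ j, x j ^ 2) = Q + L ^ 2 := by
      rw [Fin.sum_univ_castSucc]
    rw [hRHS]
    have hL : (∑ i, Phi (n + 2) x i ^ 2)
        = ∑ k ∈ Finset.range (mdim (n + 2)),
            if h : k < mdim (n + 2) then Phi (n + 2) x ⟨k, h⟩ ^ 2 else 0 :=
      sum_fin_eq_sum_range (mdim (n + 2)) (fun k h => Phi (n + 2) x ⟨k, h⟩ ^ 2)
    rw [hL]
    have hsplit : ∑ k ∈ Finset.range (mdim (n + 2)),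
            (if h : k < mdim (n + 2) then Phi (n + 2) x ⟨k, h⟩ ^ 2 else 0)
        = (∑ k ∈ Finset.range (mdim (n + 1)),
            (if h : k < mdim (n + 2) then Phi (n + 2) x ⟨k, h⟩ ^ 2 else 0))
          + (∑ k ∈ Finset.Ico (mdim (n + 1)) (mdim (n + 1) + (n + 2)),
            (if h : k < mdim (n + 2) then Phi (n + 2) x ⟨k, h⟩ ^ 2 else 0))
          + (if h : mdim (n + 1) + (n + 2) < mdim (n + 2) then
              Phi (n + 2) x ⟨mdim (n + 1) + (n + 2), h⟩ ^ 2 else 0) := by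
      rw [show Finset.range (mdim (n + 2)) = Finset.range (mdim (n + 1) + (n + 2) + 1) from
          by rw [hm2], Finset.sum_range_succ,
        ← Finset.sum_range_add_sum_Ico _ (by omega : mdim (n+1) ≤ mdim (n+1) + (n+2))]
    rw [hsplit]
    -- Part 1
    have hpart1 : (∑ k ∈ Finset.range (mdim (n + 1)),
            (if h : k < mdim (n + 2) then Phi (n + 2) x ⟨k, h⟩ ^ 2 else 0))
        = a ^ 2 * (1 / a') ^ 2 * Q ^ 2 := by
      have step : ∀ k ∈ Finset.range (mdim (n + 1)),
          (if h : k < mdim (n + 2) then Phi (n + 2) x ⟨k, h⟩ ^ 2 else 0)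
          = a ^ 2 * (1 / a') ^ 2 *
            (if h : k < mdim (n + 1) then Phi (n + 1) y ⟨k, h⟩ ^ 2 else 0) := by
        intro k hk
        have hk1 : k < mdim (n + 1) := Finset.mem_range.1 hk
        have hk2 : k < mdim (n + 2) := by omega
        rw [dif_pos hk2, dif_pos hk1]
        simp only [Phi]
        rw [dif_pos hk1]
        ring
      rw [Finset.sum_congr rfl step, ← Finset.mul_sum,
        ← sum_fin_eq_sum_range (mdim (n + 1)) (fun k h => Phi (n + 1) y ⟨k, h⟩ ^ 2)]
      have : (∑ i : Fin (mdim (n+1)), Phi (n + 1) y ⟨i, i.isLt⟩ ^ 2) = Q ^ 2 := hIH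
      rw [this]
    -- Part 2
    have hpart2 : (∑ k ∈ Finset.Ico (mdim (n + 1)) (mdim (n + 1) + (n + 2)),
            (if h : k < mdim (n + 2) then Phi (n + 2) x ⟨k, h⟩ ^ 2 else 0))
        = a ^ 2 * L ^ 2 * Q := by
      rw [Finset.sum_Ico_eq_sum_range]
      have hsub : mdim (n + 1) + (n + 2) - mdim (n + 1) = n + 2 := by omega
      rw [hsub]
      have step : ∀ j ∈ Finset.range (n + 2),
          (if h : mdim (n + 1) + j < mdim (n + 2) then
              Phi (n + 2) x ⟨mdim (n + 1) + j, h⟩ ^ 2 else 0)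
          = a ^ 2 * L ^ 2 *
            (if h : j < n + 2 then x ((⟨j, h⟩ : Fin (n + 2)).castSucc) ^ 2 else 0) := by
        intro j hj
        have hj1 : j < n + 2 := Finset.mem_range.1 hj
        have hk2 : mdim (n + 1) + j < mdim (n + 2) := by omega
        rw [dif_pos hk2, dif_pos hj1]
        simp only [Phi]
        rw [dif_neg (by omega), dif_pos (by omega)]
        have hx : x ⟨mdim (n + 1) + j - mdim (n + 1), by omega⟩
            = x ((⟨j, hj1⟩ : Fin (n + 2)).castSucc) := by
          congr 1
          ext
          simp
        rw [hx]
        rw [← hLdef]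
        ring
      rw [Finset.sum_congr rfl step, ← Finset.mul_sum,
        ← sum_fin_eq_sum_range (n + 2) (fun k h => x ((⟨k, h⟩ : Fin (n + 2)).castSucc) ^ 2)]
    -- Part 3
    have hpart3 : (if h : mdim (n + 1) + (n + 2) < mdim (n + 2) then
              Phi (n + 2) x ⟨mdim (n + 1) + (n + 2), h⟩ ^ 2 else 0)
        = (a * (1 / (((n:ℝ) + 2) * a) * (Q - ((n:ℝ) + 2) * L ^ 2))) ^ 2 := by
      rw [dif_pos (by omega)]
      simp only [Phi]
      rw [dif_neg (by omega), dif_neg (by omega)]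
    rw [hpart1, hpart2, hpart3]
    -- final algebra
    have hNpos : (0:ℝ) < (n:ℝ) + 2 := by positivity
    have hN1pos : (0:ℝ) < (n:ℝ) + 1 := by positivity
    have e1 : a ^ 2 * (1 / a') ^ 2 = (2 * ((n:ℝ) + 2) + 2) / ((n:ℝ) + 2)
        * (((n:ℝ) + 1) / (2 * ((n:ℝ) + 1) + 2)) := by
      rw [div_pow, one_pow, ha, ha']
      field_simp
    have e3 : (a * (1 / (((n:ℝ) + 2) * a) * (Q - ((n:ℝ) + 2) * L ^ 2))) ^ 2
        = (Q - ((n:ℝ) + 2) * L ^ 2) ^ 2 / ((n:ℝ) + 2) ^ 2 := by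
      have : (a * (1 / (((n:ℝ) + 2) * a) * (Q - ((n:ℝ) + 2) * L ^ 2))) ^ 2
          = a ^ 2 * (1 / (((n:ℝ) + 2) * a)) ^ 2 * (Q - ((n:ℝ) + 2) * L ^ 2) ^ 2 := by ring
      rw [this, div_pow, one_pow, mul_pow]
      field_simp
    rw [e1, e3, ha]
    field_simp
    ring

/-- `|Φ_n(x)| = |x|²` for every `x ∈ ℝ^{n+1}` when `n ≥ 1`. -/
theorem veronese_norm_sq (n : ℕ) (hn : 1 ≤ n) (x : Fin (n + 1) → ℝ) :
    Real.sqrt (∑ i, Phi n x i ^ 2) = ∑ j, x j ^ 2 := by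
  cases n with
  | zero => omega
  | succ k =>
    rw [phi_sum k x]
    exact Real.sqrt_sq (by positivity)
end

section
/- For n ≥ 1 and any point x on the unit sphere S^n ⊂ ℝ^{n+1}, and any vectors u, v ∈ ℝ^{n+1} tangent to S^n at x (i.e., u·x = v·x = 0), one has (DΦ_n(x)u)·(DΦ_n(x)v) = (2(n+1)/n)(u·v). In particular, Φ_n restricted to S^n is a conformal immersion into S^{m(n)−1} with constant conformal factor a_n = √(2(n+1)/n). -/
lemma mdim_two_step (n : ℕ) : mdim (n + 2) = mdim (n + 1) + (n + 2) + 1 := by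
  have h : mdim (n + 2) = mdim (n + 1) + (n + 1 + 2) := mdim_succ (n + 1)
  omega

noncomputable def resL (n : ℕ) : ((Fin (n+1) → ℝ)) →L[ℝ] (Fin n → ℝ) :=
  ContinuousLinearMap.pi fun j => ContinuousLinearMap.proj j.castSucc

lemma resL_apply (n : ℕ) (w : Fin (n+1) → ℝ) : resL n w = fun j => w j.castSucc := rfl

lemma hasFDerivAt_sq {m : ℕ} (x : Fin m → ℝ) (i : Fin m) :
    HasFDerivAt (fun y : Fin m → ℝ => y i ^ 2)
      ((2 * x i) • ContinuousLinearMap.proj (R := ℝ) (φ := fun _ : Fin m => ℝ) i) x := by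
  have h := (hasFDerivAt_apply (𝕜 := ℝ) i x).fun_mul (hasFDerivAt_apply (𝕜 := ℝ) i x)
  have e : x i • (ContinuousLinearMap.proj (R := ℝ) (φ := fun _ : Fin m => ℝ) i) +
      x i • ContinuousLinearMap.proj i = (2 * x i) • ContinuousLinearMap.proj i := by
    rw [← add_smul]; congr 1; ring
  rw [← e]
  simpa only [pow_two] using h

noncomputable def DPhi : (n : ℕ) → (Fin (n + 1) → ℝ) → ((Fin (n + 1) → ℝ) →L[ℝ] (Fin (mdim n) → ℝ))
  | 0, _ => 0
  | 1, x => ContinuousLinearMap.pi fun i =>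
      if (i : ℕ) = 0 then
        (2 * x 0) • ContinuousLinearMap.proj 1 + x 1 • ((2:ℝ) • ContinuousLinearMap.proj 0)
      else
        (2 * x 0) • ContinuousLinearMap.proj 0 - (2 * x 1) • ContinuousLinearMap.proj 1
  | (n + 2), x => ContinuousLinearMap.pi fun i =>
      aCoef (n + 2) •
        (if h1 : (i : ℕ) < mdim (n + 1) then
          (1 / aCoef (n + 1)) •
            ((ContinuousLinearMap.proj (⟨(i : ℕ), h1⟩ : Fin (mdim (n+1)))).comp
              ((DPhi (n + 1) (fun j => x j.castSucc)).comp (resL (n+2))))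
        else if h2 : (i : ℕ) < mdim (n + 1) + (n + 2) then
          x (⟨(i : ℕ) - mdim (n + 1), by omega⟩ : Fin (n+3)) • ContinuousLinearMap.proj (Fin.last (n + 2)) +
            x (Fin.last (n + 2)) • ContinuousLinearMap.proj (⟨(i : ℕ) - mdim (n + 1), by omega⟩ : Fin (n+3))
        else
          (1 / (((n:ℝ) + 2) * aCoef (n + 2))) •
            ((∑ j : Fin (n + 2), (2 * x j.castSucc) • ContinuousLinearMap.proj (R := ℝ) (φ := fun _ : Fin (n+3) => ℝ) j.castSucc)
              - ((n:ℝ) + 2) • ((2 * x (Fin.last (n+2))) • ContinuousLinearMap.proj (Fin.last (n + 2)))))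

lemma hasFDerivAt_Phi : ∀ (n : ℕ) (x : Fin (n+1) → ℝ), HasFDerivAt (Phi n) (DPhi n x) x
  | 0, x => by
      exact hasFDerivAt_const _ _
  | 1, x => by
      rw [hasFDerivAt_pi']
      intro i
      simp only [DPhi, ContinuousLinearMap.proj_pi]
      by_cases hi : (i : ℕ) = 0
      · simp only [Phi, hi, if_true]
        exact ((hasFDerivAt_apply 0 x).const_mul 2).mul (hasFDerivAt_apply 1 x)
      · simp only [Phi, hi, if_false]
        exact (hasFDerivAt_sq x 0).sub (hasFDerivAt_sq x 1)
  | (n + 2), x => by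
      rw [hasFDerivAt_pi']
      intro i
      simp only [DPhi, ContinuousLinearMap.proj_pi]
      have hres : HasFDerivAt (fun y : Fin (n+3) → ℝ => (fun j : Fin (n+2) => y j.castSucc))
          (resL (n+2)) x := by
        rw [resL, hasFDerivAt_pi]
        intro j
        exact hasFDerivAt_apply _ x
      by_cases h1 : (i : ℕ) < mdim (n + 1)
      · simp only [Phi, dif_pos h1, dif_neg, dite_eq_ite]
        have hinner := (hasFDerivAt_Phi (n+1) (fun j => x j.castSucc)).comp x hres
        have hcomp := ((ContinuousLinearMap.proj (⟨(i:ℕ), h1⟩ : Fin (mdim (n+1)))).hasFDerivAt).comp x hinner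
        exact (hcomp.const_mul (1 / aCoef (n+1))).const_mul (aCoef (n+2))
      · by_cases h2 : (i : ℕ) < mdim (n + 1) + (n + 2)
        · simp only [Phi, dif_neg h1, dif_pos h2]
          exact ((hasFDerivAt_apply _ x).mul (hasFDerivAt_apply _ x)).const_mul (aCoef (n+2))
        · simp only [Phi, dif_neg h1, dif_neg h2]
          have hsum : HasFDerivAt (fun y : Fin (n+3) → ℝ => ∑ j : Fin (n+2), y j.castSucc ^ 2)
              (∑ j : Fin (n+2), (2 * x j.castSucc) • ContinuousLinearMap.proj (R := ℝ) (φ := fun _ : Fin (n+3) => ℝ) j.castSucc) x :=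
            HasFDerivAt.fun_sum (u := Finset.univ)
              (fun j (_ : j ∈ Finset.univ) => hasFDerivAt_sq x (Fin.castSucc j))
          have hlast : HasFDerivAt (fun y : Fin (n+3) → ℝ => ((n:ℝ) + 2) * y (Fin.last (n+2)) ^ 2)
              (((n:ℝ) + 2) • ((2 * x (Fin.last (n+2))) • ContinuousLinearMap.proj (Fin.last (n + 2)))) x :=
            (hasFDerivAt_sq x (Fin.last (n+2))).const_mul ((n:ℝ) + 2)
          exact ((hsum.sub hlast).const_mul (1 / (((n:ℝ) + 2) * aCoef (n + 2)))).const_mul (aCoef (n+2))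

lemma DPhi_one (x u : Fin (1+1) → ℝ) (k : Fin (mdim 1)) :
    DPhi 1 x u k = if (k:ℕ) = 0 then 2 * x 0 * u 1 + 2 * x 1 * u 0 else 2 * x 0 * u 0 - 2 * x 1 * u 1 := by
  by_cases hk : (k:ℕ) = 0 <;>
    simp [DPhi, hk, smul_eq_mul] <;> ring

lemma key : (n : ℕ) → 1 ≤ n → ∀ x u v : Fin (n+1) → ℝ,
    (∑ k, DPhi n x u k * DPhi n x v k)
      = (2*(n:ℝ)+2)/n * ((∑ l, x l ^ 2) * (∑ l, u l * v l))
        + (2*(n:ℝ)-2)/n * ((∑ l, u l * x l) * (∑ l, v l * x l))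
  | 0, h, _, _, _ => absurd h (by omega)
  | 1, _, x, u, v => by
    rw [show (∑ k : Fin (mdim 1), DPhi 1 x u k * DPhi 1 x v k)
        = ∑ k : Fin 2, DPhi 1 x u k * DPhi 1 x v k from rfl]
    simp [Fin.sum_univ_two, Fin.sum_univ_succ, DPhi_one]
    rw [DPhi_one x u (0 : Fin 2), DPhi_one x v (0 : Fin 2), DPhi_one x u (1 : Fin 2), DPhi_one x v (1 : Fin 2)]
    norm_num
    ring
  | (n+2), _, x, u, v => by
    have hm : mdim (n+1) + (n+2) + 1 = mdim (n+2) := (mdim_two_step n).symm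
    have hα0 : aCoef (n+2) ≠ 0 := ne_of_gt (aCoef_pos _ (by omega))
    have hβ0 : aCoef (n+1) ≠ 0 := ne_of_gt (aCoef_pos _ (by omega))
    have hN1 : ((n:ℝ)+1) ≠ 0 := by positivity
    have hN2 : ((n:ℝ)+2) ≠ 0 := by positivity
    have hN3 : (2*((n:ℝ)+1)+2) ≠ 0 := by positivity
    have hα2 : aCoef (n+2) ^ 2 = (2*((n:ℝ)+2)+2)/((n:ℝ)+2) := by
      rw [aCoef_sq _ (by omega)]; push_cast; ring
    have hβ2 : aCoef (n+1) ^ 2 = (2*((n:ℝ)+1)+2)/((n:ℝ)+1) := by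
      rw [aCoef_sq _ (by omega)]; push_cast; ring
    have hq : (aCoef (n+2) * (1/aCoef (n+1)))^2
        = ((2*((n:ℝ)+2)+2)/((n:ℝ)+2)) * (1/((2*((n:ℝ)+1)+2)/((n:ℝ)+1))) := by
      rw [mul_pow, div_pow, one_pow, hα2, hβ2]
    have hcs : ∀ (j : Fin (n+2)) (h : (j:ℕ) < n+3), (⟨(j:ℕ), h⟩ : Fin (n+3)) = j.castSucc :=
      fun j h => Fin.ext (by simp)
    have IH' : (∑ k : Fin (mdim (n+1)),
          DPhi (n+1) (fun j : Fin (n+2) => x j.castSucc) (fun j => u j.castSucc) k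
            * DPhi (n+1) (fun j : Fin (n+2) => x j.castSucc) (fun j => v j.castSucc) k)
        = (2*((n:ℝ)+1)+2)/((n:ℝ)+1) * ((∑ l : Fin (n+2), x l.castSucc ^ 2)
              * (∑ l : Fin (n+2), u l.castSucc * v l.castSucc))
          + (2*((n:ℝ)+1)-2)/((n:ℝ)+1) * ((∑ l : Fin (n+2), u l.castSucc * x l.castSucc)
              * (∑ l : Fin (n+2), v l.castSucc * x l.castSucc)) := by
      have IH := key (n+1) (by omega) (fun j => x j.castSucc) (fun j => u j.castSucc)
        (fun j => v j.castSucc)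
      push_cast at IH
      exact IH
    have e1 : ∀ (w : Fin (n+3) → ℝ) (j : Fin (mdim (n+1))),
        DPhi (n+2) x w (Fin.cast hm ((Fin.castAdd (n+2) j).castSucc))
          = aCoef (n+2) * ((1/aCoef (n+1))
              * DPhi (n+1) (fun i : Fin (n+2) => x i.castSucc) (fun i => w i.castSucc) j) := by
      intro w j
      have hj : ((Fin.cast hm ((Fin.castAdd (n+2) j).castSucc) : Fin (mdim (n+2))) : ℕ)
          < mdim (n+1) := by simpa using j.isLt
      simp only [DPhi, ContinuousLinearMap.pi_apply]
      rw [dif_pos hj]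
      simp [ContinuousLinearMap.smul_apply, ContinuousLinearMap.comp_apply,
        ContinuousLinearMap.proj_apply, resL_apply, smul_eq_mul,
        Fin.coe_cast, Fin.coe_castSucc, Fin.coe_castAdd, Fin.eta]
    have e2 : ∀ (w : Fin (n+3) → ℝ) (j : Fin (n+2)),
        DPhi (n+2) x w (Fin.cast hm ((Fin.natAdd (mdim (n+1)) j).castSucc))
          = aCoef (n+2) * (x j.castSucc * w (Fin.last (n+2))
              + x (Fin.last (n+2)) * w j.castSucc) := by
      intro w j
      have hjlt := j.isLt
      have hj1 : ¬ ((Fin.cast hm ((Fin.natAdd (mdim (n+1)) j).castSucc) : Fin (mdim (n+2))) : ℕ)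
          < mdim (n+1) := by
        simp only [Fin.coe_cast, Fin.coe_castSucc, Fin.coe_natAdd]; omega
      have hj2 : ((Fin.cast hm ((Fin.natAdd (mdim (n+1)) j).castSucc) : Fin (mdim (n+2))) : ℕ)
          < mdim (n+1) + (n+2) := by
        simp only [Fin.coe_cast, Fin.coe_castSucc, Fin.coe_natAdd]; omega
      simp only [DPhi, ContinuousLinearMap.pi_apply]
      rw [dif_neg hj1, dif_pos hj2]
      simp [ContinuousLinearMap.smul_apply, ContinuousLinearMap.add_apply,
        ContinuousLinearMap.proj_apply, smul_eq_mul,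
        Fin.coe_cast, Fin.coe_castSucc, Fin.coe_natAdd, Nat.add_sub_cancel_left, hcs]
      ring
    have e3 : ∀ (w : Fin (n+3) → ℝ),
        DPhi (n+2) x w (Fin.cast hm (Fin.last (mdim (n+1) + (n+2))))
          = aCoef (n+2) * ((1/(((n:ℝ)+2) * aCoef (n+2)))
              * ((∑ j : Fin (n+2), 2 * x j.castSucc * w j.castSucc)
                - ((n:ℝ)+2) * (2 * x (Fin.last (n+2)) * w (Fin.last (n+2))))) := by
      intro w
      have hj1 : ¬ ((Fin.cast hm (Fin.last (mdim (n+1) + (n+2))) : Fin (mdim (n+2))) : ℕ)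
          < mdim (n+1) := by
        simp only [Fin.coe_cast, Fin.val_last]; omega
      have hj2 : ¬ ((Fin.cast hm (Fin.last (mdim (n+1) + (n+2))) : Fin (mdim (n+2))) : ℕ)
          < mdim (n+1) + (n+2) := by
        simp only [Fin.coe_cast, Fin.val_last]; omega
      simp only [DPhi, ContinuousLinearMap.pi_apply]
      rw [dif_neg hj1, dif_neg hj2]
      simp [ContinuousLinearMap.smul_apply, ContinuousLinearMap.sub_apply,
        ContinuousLinearMap.sum_apply, ContinuousLinearMap.proj_apply, smul_eq_mul]
    have expand1 : ∀ j : Fin (mdim (n+1)),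
        (aCoef (n+2) * ((1/aCoef (n+1))
            * DPhi (n+1) (fun i : Fin (n+2) => x i.castSucc) (fun i => u i.castSucc) j))
          * (aCoef (n+2) * ((1/aCoef (n+1))
            * DPhi (n+1) (fun i : Fin (n+2) => x i.castSucc) (fun i => v i.castSucc) j))
        = (aCoef (n+2) * (1/aCoef (n+1)))^2
            * (DPhi (n+1) (fun i : Fin (n+2) => x i.castSucc) (fun i => u i.castSucc) j
              * DPhi (n+1) (fun i : Fin (n+2) => x i.castSucc) (fun i => v i.castSucc) j) :=
      fun j => by ring
    have expand2 : ∀ j : Fin (n+2),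
        (aCoef (n+2) * (x j.castSucc * u (Fin.last (n+2)) + x (Fin.last (n+2)) * u j.castSucc))
          * (aCoef (n+2) * (x j.castSucc * v (Fin.last (n+2)) + x (Fin.last (n+2)) * v j.castSucc))
        = aCoef (n+2)^2 * (u (Fin.last (n+2)) * v (Fin.last (n+2))) * (x j.castSucc ^ 2)
          + aCoef (n+2)^2 * (u (Fin.last (n+2)) * x (Fin.last (n+2))) * (v j.castSucc * x j.castSucc)
          + aCoef (n+2)^2 * (v (Fin.last (n+2)) * x (Fin.last (n+2))) * (u j.castSucc * x j.castSucc)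
          + aCoef (n+2)^2 * (x (Fin.last (n+2)) ^ 2) * (u j.castSucc * v j.castSucc) :=
      fun j => by ring
    have h2u : (∑ j : Fin (n+2), 2 * x j.castSucc * u j.castSucc)
        = 2 * ∑ j : Fin (n+2), u j.castSucc * x j.castSucc := by
      rw [Finset.mul_sum]; exact Finset.sum_congr rfl fun j _ => by ring
    have h2v : (∑ j : Fin (n+2), 2 * x j.castSucc * v j.castSucc)
        = 2 * ∑ j : Fin (n+2), v j.castSucc * x j.castSucc := by
      rw [Finset.mul_sum]; exact Finset.sum_congr rfl fun j _ => by ring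
    have hαα : ∀ X Y : ℝ,
        (aCoef (n+2) * ((1/(((n:ℝ)+2) * aCoef (n+2))) * X))
          * (aCoef (n+2) * ((1/(((n:ℝ)+2) * aCoef (n+2))) * Y))
        = (X * Y) / (((n:ℝ)+2)^2) := by
      intro X Y; field_simp
    push_cast
    rw [← Fin.sum_congr' (fun k : Fin (mdim (n+2)) => DPhi (n+2) x u k * DPhi (n+2) x v k) hm,
      Fin.sum_univ_castSucc, Fin.sum_univ_add]
    simp only [e1, e2, e3]
    rw [Fin.sum_univ_castSucc (n := n+2), Fin.sum_univ_castSucc (n := n+2),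
      Fin.sum_univ_castSucc (n := n+2), Fin.sum_univ_castSucc (n := n+2)]
    simp only [expand1, expand2]
    rw [h2u, h2v, hαα]
    simp only [Finset.sum_add_distrib, ← Finset.mul_sum]
    rw [IH', hq, hα2]
    field_simp
    ring

/-- For `x` on the unit sphere and `u, v` tangent at `x`,
`(DΦ_n(x)u)·(DΦ_n(x)v) = (2(n+1)/n)(u·v)`: `Φ_n` restricted to the sphere is a
conformal immersion with conformal factor `a_n = √(2(n+1)/n)`. -/
theorem veronese_conformal (n : ℕ) (hn : 1 ≤ n) (x u v : Fin (n + 1) → ℝ)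
    (hx : ∑ l, x l ^ 2 = 1) (hu : ∑ l, u l * x l = 0) (hv : ∑ l, v l * x l = 0) :
    ∑ k, fderiv ℝ (Phi n) x u k * fderiv ℝ (Phi n) x v k
      = (2 * ((n : ℝ) + 1) / n) * ∑ l, u l * v l := by
  rw [(hasFDerivAt_Phi n x).fderiv, key n hn x u v, hx, hu, hv]
  ring
end
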